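/- arXiv:0908.1203 — 3 statements merged into one kernel-verified Lean document; each statement's English description precedes it below -/
import Mathlib

section
/- Let (Ω, 𝒜, τ) be a finite measure space and let f : Ω → [0, ∞) be a measurable function. Then f is τ-essentially bounded if and only if for every measurable function h : Ω → [0, ∞) with h > 0 τ-almost everywhere and ∫ h dτ < ∞, and for every real number p ∈ [1, ∞), one has ∫ f^p · h dτ < ∞. -/
open MeasureTheory ENNReal NNReal

/-- Let `(Ω, 𝒜, τ)` be a finite measure space and `f : Ω → [0, ∞)` a
measurable function.  Then `f` is `τ`-essentially bounded if and only if for every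
measurable `h : Ω → [0, ∞)` with `h > 0` `τ`-a.e. and `∫ h dτ < ∞`, and every real
`p ∈ [1, ∞)`, one has `∫ f^p · h dτ < ∞`. -/
theorem essentially_bounded_iff_all_weighted_Lp
    {Ω : Type*} [MeasurableSpace Ω] (τ : Measure Ω) [IsFiniteMeasure τ]
    (f : Ω → ℝ≥0) (hf : Measurable f) :
    (∃ C : ℝ≥0, ∀ᵐ ω ∂τ, f ω ≤ C) ↔
      ∀ h : Ω → ℝ≥0, Measurable h → (∀ᵐ ω ∂τ, 0 < h ω) →
        (∫⁻ ω, (h ω : ℝ≥0∞) ∂τ) < ∞ →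
        ∀ p : ℝ, 1 ≤ p → (∫⁻ ω, (f ω : ℝ≥0∞) ^ p * (h ω : ℝ≥0∞) ∂τ) < ∞ := by
  constructor
  · rintro ⟨C, hC⟩ h hmeas hpos hint p hp
    have hbound : ∀ᵐ ω ∂τ, (f ω : ℝ≥0∞) ^ p * (h ω : ℝ≥0∞) ≤
        (C : ℝ≥0∞) ^ p * (h ω : ℝ≥0∞) := by
      filter_upwards [hC] with ω hω
      exact mul_le_mul_left
        (ENNReal.rpow_le_rpow (by exact_mod_cast hω) (by linarith)) _
    calc ∫⁻ ω, (f ω : ℝ≥0∞) ^ p * (h ω : ℝ≥0∞) ∂τ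
        ≤ ∫⁻ ω, (C : ℝ≥0∞) ^ p * (h ω : ℝ≥0∞) ∂τ := lintegral_mono_ae hbound
      _ = (C : ℝ≥0∞) ^ p * ∫⁻ ω, (h ω : ℝ≥0∞) ∂τ :=
          lintegral_const_mul _ hmeas.coe_nnreal_ennreal
      _ < ∞ := ENNReal.mul_lt_top
          (ENNReal.rpow_lt_top_of_nonneg (by linarith) coe_ne_top) hint
  · intro H
    by_contra hnb
    push_neg at hnb
    -- the sets where f is large
    set S : ℕ → Set Ω := fun n => {ω | ((n : ℝ≥0) + 1) < f ω} with hSdef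
    have hS : ∀ n, MeasurableSet (S n) := fun n =>
      measurableSet_lt measurable_const hf
    set t : ℕ → ℝ≥0∞ := fun n => τ (S n) with htdef
    have ht0 : ∀ n, t n ≠ 0 := by
      intro n
      have h1 := hnb ((n : ℝ≥0) + 1)
      rw [Filter.Frequently, ae_iff] at h1
      simpa [htdef, hSdef, not_le] using h1
    have httop : ∀ n, t n ≠ ∞ := fun n => (measure_lt_top τ _).ne
    -- A n = n+1 in ℝ≥0∞
    set A : ℕ → ℝ≥0∞ := fun n => (n : ℝ≥0∞) + 1 with hAdef
    have hA0 : ∀ n, A n ≠ 0 := fun n => by simp [hAdef]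
    have hAtop : ∀ n, A n ≠ ∞ := fun n => by
      simp [hAdef]
    have hAcoe : ∀ n, A n = (((n : ℝ≥0) + 1 : ℝ≥0) : ℝ≥0∞) := fun n => by
      push_cast [hAdef]; ring
    -- coefficients
    set c : ℕ → ℝ≥0∞ := fun n => (A n)⁻¹ * (A n)⁻¹ * (t n)⁻¹ with hcdef
    have hctop : ∀ n, c n ≠ ∞ := by
      intro n
      exact ENNReal.mul_ne_top
        (ENNReal.mul_ne_top (ENNReal.inv_ne_top.mpr (hA0 n))
          (ENNReal.inv_ne_top.mpr (hA0 n))) (ENNReal.inv_ne_top.mpr (ht0 n))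
    -- the weight
    set g : Ω → ℝ≥0∞ := fun ω =>
      1 + ∑' n, (S n).indicator (fun _ => c n) ω with hgdef
    have hgmeas : Measurable g :=
      measurable_const.add
        (Measurable.ennreal_tsum fun n => measurable_const.indicator (hS n))
    have hg1 : ∀ ω, 1 ≤ g ω := fun ω => le_self_add
    have hgtop : ∀ ω, g ω ≠ ∞ := by
      intro ω
      obtain ⟨N, hN⟩ := exists_nat_ge (f ω)
      have hzero : ∀ n ∉ Finset.range N, (S n).indicator (fun _ => c n) ω = 0 := by
        intro n hn
        rw [Finset.mem_range, not_lt] at hn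
        apply Set.indicator_of_notMem
        simp only [hSdef, Set.mem_setOf_eq, not_lt]
        calc f ω ≤ (N : ℝ≥0) := hN
          _ ≤ (n : ℝ≥0) := by exact_mod_cast hn
          _ ≤ (n : ℝ≥0) + 1 := le_self_add
      rw [hgdef]
      simp only
      rw [tsum_eq_sum hzero]
      refine ENNReal.add_ne_top.mpr ⟨one_ne_top, ?_⟩
      refine (ENNReal.sum_lt_top.mpr fun n _ => ?_).ne
      exact lt_of_le_of_lt (Set.indicator_apply_le (g := fun _ => c n) fun _ => le_refl _)
        (lt_top_iff_ne_top.mpr (hctop n))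
    set h : Ω → ℝ≥0 := fun ω => (g ω).toNNReal with hhdef
    have hcoe : ∀ ω, (h ω : ℝ≥0∞) = g ω := fun ω => coe_toNNReal (hgtop ω)
    have hhmeas : Measurable h := hgmeas.ennreal_toNNReal
    have hhpos : ∀ᵐ ω ∂τ, 0 < h ω := by
      refine Filter.Eventually.of_forall fun ω => ?_
      exact ENNReal.toNNReal_pos (by
        intro h0; exact absurd (h0 ▸ hg1 ω) (by simp)) (hgtop ω)
    -- integral of each indicator piece
    have hind : ∀ (d : ℕ → ℝ≥0∞),
        ∫⁻ ω, ∑' n, (S n).indicator (fun _ => d n) ω ∂τ = ∑' n, d n * t n := by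
      intro d
      rw [lintegral_tsum fun n => (measurable_const.indicator (hS n)).aemeasurable]
      exact tsum_congr fun n => lintegral_indicator_const (hS n) (d n)
    -- integrability of h
    have hgint : ∫⁻ ω, (h ω : ℝ≥0∞) ∂τ < ∞ := by
      simp only [hcoe, hgdef]
      rw [lintegral_add_left measurable_const, lintegral_one, hind]
      have hsum : ∀ n, c n * t n = (A n)⁻¹ * (A n)⁻¹ := by
        intro n
        rw [hcdef]
        simp only
        rw [mul_assoc, ENNReal.inv_mul_cancel (ht0 n) (httop n), mul_one]
      simp only [hsum]
      refine ENNReal.add_lt_top.mpr ⟨measure_lt_top τ _, ?_⟩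
      have hcoeA : ∀ n : ℕ, (A n)⁻¹ * (A n)⁻¹
          = ((((n : ℝ≥0) + 1)⁻¹ * ((n : ℝ≥0) + 1)⁻¹ : ℝ≥0) : ℝ≥0∞) := by
        intro n
        rw [hAcoe n, ← ENNReal.coe_inv (by positivity), ← ENNReal.coe_mul]
      simp only [hcoeA]
      rw [lt_top_iff_ne_top]
      rw [ENNReal.tsum_coe_ne_top_iff_summable]
      rw [← NNReal.summable_coe]
      have hR : Summable (fun n : ℕ => 1 / ((n : ℝ) + 1) ^ 2) := by
        have h2 : Summable (fun n : ℕ => 1 / (n : ℝ) ^ 2) :=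
          Real.summable_one_div_nat_pow.mpr (by norm_num)
        have := (_root_.summable_nat_add_iff (f := fun n : ℕ => 1 / (n : ℝ) ^ 2) 1).mpr h2
        convert this using 2 with n
        push_cast
        exacts [rfl, by push_cast; ring]
      convert hR using 2 with n
      push_cast
      rw [one_div, sq, mul_inv]
    -- apply the hypothesis with p = 1
    have hfin := H h hhmeas hhpos hgint 1 le_rfl
    -- but the integral is infinite
    have hinf : ∫⁻ ω, (f ω : ℝ≥0∞) ^ (1 : ℝ) * (h ω : ℝ≥0∞) ∂τ = ∞ := by
      have hpt : ∀ ω, ∑' n, (S n).indicator (fun _ => A n * c n) ω ≤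
          (f ω : ℝ≥0∞) ^ (1 : ℝ) * (h ω : ℝ≥0∞) := by
        intro ω
        rw [ENNReal.rpow_one, hcoe, hgdef]
        simp only
        rw [mul_add, mul_one]
        refine le_trans ?_ le_add_self
        rw [← ENNReal.tsum_mul_left]
        refine ENNReal.tsum_le_tsum fun n => ?_
        by_cases hmem : ω ∈ S n
        · rw [Set.indicator_of_mem hmem, Set.indicator_of_mem hmem]
          refine mul_le_mul_left ?_ _
          rw [hAcoe n]
          have hmem' : ((n : ℝ≥0) + 1) < f ω := by
            simpa [hSdef] using hmem
          exact_mod_cast le_of_lt hmem'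
        · rw [Set.indicator_of_notMem hmem, Set.indicator_of_notMem hmem,
            mul_zero]
      have hlow : ∑' n, (A n * c n) * t n ≤
          ∫⁻ ω, (f ω : ℝ≥0∞) ^ (1 : ℝ) * (h ω : ℝ≥0∞) ∂τ := by
        rw [← hind (fun n => A n * c n)]
        exact lintegral_mono hpt
      have hval : ∀ n, (A n * c n) * t n = (A n)⁻¹ := by
        intro n
        rw [hcdef]
        simp only
        rw [show A n * ((A n)⁻¹ * (A n)⁻¹ * (t n)⁻¹) * t n
          = (A n * (A n)⁻¹) * (A n)⁻¹ * ((t n)⁻¹ * t n) by ring,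
          ENNReal.mul_inv_cancel (hA0 n) (hAtop n),
          ENNReal.inv_mul_cancel (ht0 n) (httop n), one_mul, mul_one]
      have hdiv : ∑' n, (A n)⁻¹ = ∞ := by
        by_contra hne
        have : ∀ n : ℕ, (A n)⁻¹ = ((((n : ℝ≥0) + 1)⁻¹ : ℝ≥0) : ℝ≥0∞) := by
          intro n
          rw [hAcoe n, ← ENNReal.coe_inv (by positivity)]
        rw [funext this] at hne
        have hsum := ENNReal.tsum_coe_ne_top_iff_summable.mp hne
        rw [← NNReal.summable_coe] at hsum
        have hsum' : Summable (fun n : ℕ => 1 / ((n : ℝ) + 1)) := by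
          convert hsum using 2 with n
          push_cast
          rw [one_div]
        have := (_root_.summable_nat_add_iff (f := fun n : ℕ => 1 / (n : ℝ)) 1).mp
          (by convert hsum' using 2 with n; push_cast; exacts [rfl, by push_cast; ring])
        exact Real.not_summable_one_div_natCast this
      rw [funext hval, hdiv] at hlow
      exact top_le_iff.mp hlow
    rw [hinf] at hfin
    exact absurd hfin (lt_irrefl _)
end

section
/- Let (Ω, 𝒜, τ) be a finite measure space and let f : Ω → [0, ∞) be a measurable function that is not τ-essentially bounded. Then there exists a measurable function h : Ω → [0, ∞) such that h > 0 τ-almost everywhere, ∫ h dτ < ∞, and ∫ f · h dτ = ∞. -/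
open MeasureTheory ENNReal NNReal

/-- Let `(Ω, 𝒜, τ)` be a finite measure space and `f : Ω → [0, ∞)` a
measurable function which is not `τ`-essentially bounded.  Then there is a measurable
`h : Ω → [0, ∞)` with `h > 0` `τ`-a.e., `∫ h dτ < ∞` and `∫ f · h dτ = ∞`. -/
theorem exists_integrable_weight_of_not_essentially_bounded
    {Ω : Type*} [MeasurableSpace Ω] (τ : Measure Ω) [IsFiniteMeasure τ]
    (f : Ω → ℝ≥0) (hf : Measurable f)
    (hub : ¬ ∃ C : ℝ≥0, ∀ᵐ ω ∂τ, f ω ≤ C) :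
    ∃ h : Ω → ℝ≥0, Measurable h ∧ (∀ᵐ ω ∂τ, 0 < h ω) ∧
      (∫⁻ ω, (h ω : ℝ≥0∞) ∂τ) < ∞ ∧
      (∫⁻ ω, (f ω : ℝ≥0∞) * (h ω : ℝ≥0∞) ∂τ) = ∞ := by
  set E : ℕ → Set Ω := fun n => {ω | (2 : ℝ≥0) ^ n < f ω} with hEdef
  have hEm : ∀ n, MeasurableSet (E n) := fun n => measurableSet_lt measurable_const hf
  have hEpos : ∀ n, τ (E n) ≠ 0 := by
    intro n h0
    apply hub
    refine ⟨(2 : ℝ≥0) ^ n, ?_⟩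
    rw [ae_iff]
    simpa [hEdef, not_le] using h0
  have hEfin : ∀ n, τ (E n) ≠ ∞ := fun n => (measure_lt_top τ _).ne
  set c : ℕ → ℝ≥0∞ := fun n => ((2 : ℝ≥0∞) ^ n * τ (E n))⁻¹ with hcdef
  have h2ne0 : ∀ n : ℕ, ((2 : ℝ≥0∞) ^ n) ≠ 0 := fun n => by positivity
  have h2neT : ∀ n : ℕ, ((2 : ℝ≥0∞) ^ n) ≠ ∞ := fun n =>
    ENNReal.pow_ne_top (by norm_num)
  have hcne : ∀ n, c n ≠ ∞ := by
    intro n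
    simp only [hcdef, ENNReal.inv_ne_top]
    exact mul_ne_zero (h2ne0 n) (hEpos n)
  have key : ∀ n, c n * τ (E n) = ((2 : ℝ≥0∞) ^ n)⁻¹ := by
    intro n
    show ((2 : ℝ≥0∞) ^ n * τ (E n))⁻¹ * τ (E n) = ((2 : ℝ≥0∞) ^ n)⁻¹
    rw [ENNReal.mul_inv (Or.inl (h2ne0 n)) (Or.inl (h2neT n)), mul_assoc,
      ENNReal.inv_mul_cancel (hEpos n) (hEfin n), mul_one]
  set H : Ω → ℝ≥0∞ := fun ω => 1 + ∑' n, (E n).indicator (fun _ => c n) ω with hHdef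
  have hHm : Measurable H := by
    apply Measurable.add (f := fun _ => (1 : ℝ≥0∞)) (g := fun ω => ∑' n, (E n).indicator (fun _ => c n) ω) measurable_const
    exact Measurable.ennreal_tsum fun n => measurable_const.indicator (hEm n)
  have hHint : ∫⁻ ω, H ω ∂τ < ∞ := by
    simp only [hHdef]
    rw [lintegral_add_left measurable_const]
    rw [lintegral_tsum fun n => (measurable_const.indicator (hEm n)).aemeasurable]
    simp only [lintegral_indicator_const (hEm _)]
    rw [tsum_congr key]
    have : ∑' n : ℕ, ((2 : ℝ≥0∞) ^ n)⁻¹ = 2 := by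
      simp only [ENNReal.inv_pow]
      rw [ENNReal.tsum_geometric, ENNReal.one_sub_inv_two, inv_inv]
    rw [lintegral_one, this]
    exact ENNReal.add_lt_top.mpr ⟨measure_lt_top τ _, by norm_num⟩
  have hHae : ∀ᵐ ω ∂τ, H ω < ∞ := ae_lt_top hHm hHint.ne
  have hfH : ∫⁻ ω, (f ω : ℝ≥0∞) * H ω ∂τ = ∞ := by
    rw [eq_top_iff]
    have step : ∀ ω, (f ω : ℝ≥0∞) * H ω
        = (f ω : ℝ≥0∞) + ∑' n, (f ω : ℝ≥0∞) * (E n).indicator (fun _ => c n) ω := by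
      intro ω
      rw [hHdef]
      rw [mul_add, mul_one, ENNReal.tsum_mul_left]
    simp only [step]
    rw [lintegral_add_left (by exact hf.coe_nnreal_ennreal)]
    rw [lintegral_tsum (f := fun n ω => (f ω : ℝ≥0∞) * (E n).indicator (fun _ => c n) ω) fun n =>
      (hf.coe_nnreal_ennreal.mul (measurable_const.indicator (hEm n))).aemeasurable]
    have hterm : ∀ n : ℕ, (1 : ℝ≥0∞) ≤
        ∫⁻ ω, (f ω : ℝ≥0∞) * (E n).indicator (fun _ => c n) ω ∂τ := by
      intro n
      have hge : ∀ ω, (E n).indicator (fun _ => (2 : ℝ≥0∞) ^ n * c n) ω ≤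
          (f ω : ℝ≥0∞) * (E n).indicator (fun _ => c n) ω := by
        intro ω
        by_cases hω : ω ∈ E n
        · simp only [Set.indicator_of_mem hω]
          have hle : ((2 : ℝ≥0∞) ^ n) ≤ (f ω : ℝ≥0∞) := by
            have h2 : (2 : ℝ≥0) ^ n < f ω := hω
            exact_mod_cast h2.le
          exact mul_le_mul_left hle _
        · simp [Set.indicator_of_notMem hω]
      calc (1 : ℝ≥0∞) = (2 : ℝ≥0∞) ^ n * c n * τ (E n) := by
              rw [mul_assoc, key, ENNReal.mul_inv_cancel (h2ne0 n) (h2neT n)]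
        _ = ∫⁻ ω, (E n).indicator (fun _ => (2 : ℝ≥0∞) ^ n * c n) ω ∂τ := by
              rw [lintegral_indicator_const (hEm n)]
        _ ≤ _ := lintegral_mono hge
    calc (⊤ : ℝ≥0∞) = ∑' _ : ℕ, (1 : ℝ≥0∞) := (ENNReal.tsum_const_eq_top_of_ne_zero one_ne_zero).symm
      _ ≤ ∑' n, ∫⁻ ω, (f ω : ℝ≥0∞) * (E n).indicator (fun _ => c n) ω ∂τ :=
          ENNReal.tsum_le_tsum hterm
      _ ≤ _ := le_add_self
  refine ⟨fun ω => (H ω).toNNReal, hHm.ennreal_toNNReal, ?_, ?_, ?_⟩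
  · filter_upwards [hHae] with ω hω
    refine ENNReal.toNNReal_pos ?_ hω.ne
    rw [hHdef]
    simp only
    intro h0
    simpa using (le_self_add.trans_eq h0 : (1:ℝ≥0∞) ≤ 0)
  · have : ∫⁻ ω, ((H ω).toNNReal : ℝ≥0∞) ∂τ = ∫⁻ ω, H ω ∂τ := by
      apply lintegral_congr_ae
      filter_upwards [hHae] with ω hω
      exact ENNReal.coe_toNNReal hω.ne
    rw [this]; exact hHint
  · have : ∫⁻ ω, (f ω : ℝ≥0∞) * ((H ω).toNNReal : ℝ≥0∞) ∂τ
        = ∫⁻ ω, (f ω : ℝ≥0∞) * H ω ∂τ := by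
      apply lintegral_congr_ae
      filter_upwards [hHae] with ω hω
      rw [ENNReal.coe_toNNReal hω.ne]
    rw [this]; exact hfH
end

section
/- Let (Ω, 𝒜, μ) be a finite measure space for which there exists a sequence (A_k)_{k ≥ 1} of pairwise disjoint measurable sets with μ(A_k) > 0 for all k. Then there exists a measurable function f : Ω → [0, ∞) such that ∫ f^p dμ < ∞ for every real p ∈ [1, ∞), but f is not μ-essentially bounded. -/
open MeasureTheory ENNReal NNReal

lemma tsum_indicator_of_mem' {Ω : Type*} {B : ℕ → Set Ω}
    (hd : Pairwise (Function.onFun Disjoint B)) (v : ℕ → ℝ≥0∞) {ω : Ω} {j : ℕ}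
    (hω : ω ∈ B j) :
    ∑' k, (B k).indicator (fun _ => v k) ω = v j := by
  rw [tsum_eq_single j]
  · simp [Set.indicator_of_mem hω]
  · intro i hij
    have : ω ∉ B i := fun h => Set.disjoint_left.mp (hd hij) h hω
    simp [Set.indicator_of_notMem this]

lemma tsum_indicator_of_not_mem' {Ω : Type*} {B : ℕ → Set Ω} (v : ℕ → ℝ≥0∞) {ω : Ω}
    (hω : ∀ j, ω ∉ B j) :
    ∑' k, (B k).indicator (fun _ => v k) ω = 0 := by
  simp [Set.indicator_of_notMem, hω]

lemma aux_tsum_ne_top (p : ℝ) (hp : 1 ≤ p) :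
    ∑' k : ℕ, (k : ℝ≥0∞) ^ p * (2 : ℝ≥0∞)⁻¹ ^ k ≠ ∞ := by
  have hp0 : 0 ≤ p := le_trans zero_le_one hp
  have hterm : ∀ k : ℕ, (k : ℝ≥0∞) ^ p * (2 : ℝ≥0∞)⁻¹ ^ k
      = (((k : ℝ≥0) ^ p * (2 : ℝ≥0)⁻¹ ^ k : ℝ≥0) : ℝ≥0∞) := by
    intro k
    rw [ENNReal.coe_mul, ENNReal.coe_rpow_of_nonneg _ hp0, ENNReal.coe_natCast]
    congr 1
    rw [ENNReal.coe_pow, ENNReal.coe_inv (by norm_num)]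
    norm_num
  rw [tsum_congr hterm, ENNReal.tsum_coe_ne_top_iff_summable]
  rw [← NNReal.summable_coe]
  have hsum : Summable (fun k : ℕ => (k : ℝ) ^ (⌈p⌉₊ : ℕ) * (2 : ℝ)⁻¹ ^ k) :=
    summable_pow_mul_geometric_of_norm_lt_one _ (by rw [Real.norm_eq_abs, abs_of_pos] <;> norm_num)
  refine hsum.of_nonneg_of_le (fun k => by positivity) (fun k => ?_)
  push_cast
  gcongr ?_ * _
  rcases Nat.eq_zero_or_pos k with hk | hk
  · subst hk
    simp [Real.zero_rpow (by linarith : p ≠ 0), zero_pow (Nat.ceil_pos.mpr (by linarith : (0:ℝ) < p)).ne']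
  · have h1 : (1 : ℝ) ≤ (k : ℝ) := by exact_mod_cast hk
    calc (k : ℝ) ^ p ≤ (k : ℝ) ^ ((⌈p⌉₊ : ℕ) : ℝ) :=
          Real.rpow_le_rpow_of_exponent_le h1 (Nat.le_ceil p)
      _ = (k : ℝ) ^ (⌈p⌉₊ : ℕ) := Real.rpow_natCast _ _

/-- Let `(Ω, 𝒜, μ)` be a finite measure space admitting a sequence of
pairwise disjoint measurable sets of positive measure.  Then there is a measurable
function `f : Ω → [0, ∞)` with `∫ f^p dμ < ∞` for every real `p ∈ [1, ∞)` which is not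
`μ`-essentially bounded. -/
theorem exists_unbounded_function_in_all_Lp
    {Ω : Type*} [MeasurableSpace Ω] (μ : Measure Ω) [IsFiniteMeasure μ]
    (A : ℕ → Set Ω) (hmeas : ∀ k, MeasurableSet (A k))
    (hdisj : Pairwise (Function.onFun Disjoint A))
    (hpos : ∀ k, 0 < μ (A k)) :
    ∃ f : Ω → ℝ≥0, Measurable f ∧
      (∀ p : ℝ, 1 ≤ p → (∫⁻ ω, (f ω : ℝ≥0∞) ^ p ∂μ) < ∞) ∧
      ¬ ∃ C : ℝ≥0, ∀ᵐ ω ∂μ, f ω ≤ C := by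
  -- the measures tend to zero
  have htsum : ∑' k, μ (A k) ≠ ∞ := by
    rw [← measure_iUnion hdisj hmeas]
    exact (measure_lt_top μ _).ne
  have hto0 := ENNReal.tendsto_atTop_zero_of_tsum_ne_top htsum
  -- extract a subsequence with small measures
  obtain ⟨φ, hφmono, hφ⟩ : ∃ φ : ℕ → ℕ, StrictMono φ ∧
      ∀ n, μ (A (φ n)) ≤ (2 : ℝ≥0∞)⁻¹ ^ n := by
    apply Filter.extraction_forall_of_eventually (P := fun n k => μ (A k) ≤ (2 : ℝ≥0∞)⁻¹ ^ n)
    intro n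
    have hε : (0 : ℝ≥0∞) < (2 : ℝ≥0∞)⁻¹ ^ n :=
      ENNReal.pow_pos (ENNReal.inv_pos.mpr ENNReal.ofNat_ne_top) n
    exact (ENNReal.tendsto_atTop_zero.mp hto0) _ hε |>.elim
      fun N hN => Filter.eventually_atTop.mpr ⟨N, hN⟩
  set B : ℕ → Set Ω := fun k => A (φ k) with hB
  have hBmeas : ∀ k, MeasurableSet (B k) := fun k => hmeas _
  have hBdisj : Pairwise (Function.onFun Disjoint B) :=
    fun i j hij => hdisj (hφmono.injective.ne hij)
  -- the function
  set g : Ω → ℝ≥0∞ := fun ω => ∑' k, (B k).indicator (fun _ => (k : ℝ≥0∞)) ω with hg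
  have hgmeas : Measurable g :=
    Measurable.ennreal_tsum fun k => measurable_const.indicator (hBmeas k)
  have hgval : ∀ {ω j}, ω ∈ B j → g ω = j := fun {ω j} h =>
    tsum_indicator_of_mem' hBdisj _ h
  have hgzero : ∀ {ω}, (∀ j, ω ∉ B j) → g ω = 0 := fun {ω} h =>
    tsum_indicator_of_not_mem' _ h
  have hgne : ∀ ω, g ω ≠ ∞ := by
    intro ω
    by_cases h : ∃ j, ω ∈ B j
    · obtain ⟨j, hj⟩ := h
      rw [hgval hj]; exact ENNReal.natCast_ne_top j
    · rw [hgzero (not_exists.mp h)]; exact ENNReal.zero_ne_top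
  refine ⟨fun ω => (g ω).toNNReal, ENNReal.measurable_toNNReal.comp hgmeas, ?_, ?_⟩
  · intro p hp
    have hcoe : ∀ ω, ((g ω).toNNReal : ℝ≥0∞) = g ω := fun ω =>
      ENNReal.coe_toNNReal (hgne ω)
    have hpt : ∀ ω, ((g ω).toNNReal : ℝ≥0∞) ^ p
        = ∑' k, (B k).indicator (fun _ => (k : ℝ≥0∞) ^ p) ω := by
      intro ω
      rw [hcoe]
      by_cases h : ∃ j, ω ∈ B j
      · obtain ⟨j, hj⟩ := h
        rw [hgval hj, tsum_indicator_of_mem' hBdisj _ hj]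
      · rw [hgzero (not_exists.mp h), tsum_indicator_of_not_mem' _ (not_exists.mp h),
          ENNReal.zero_rpow_of_pos (by linarith)]
    calc ∫⁻ ω, ((g ω).toNNReal : ℝ≥0∞) ^ p ∂μ
        = ∫⁻ ω, ∑' k, (B k).indicator (fun _ => (k : ℝ≥0∞) ^ p) ω ∂μ := by
          exact lintegral_congr hpt
      _ = ∑' k, ∫⁻ ω, (B k).indicator (fun _ => (k : ℝ≥0∞) ^ p) ω ∂μ :=
          lintegral_tsum fun k => (measurable_const.indicator (hBmeas k)).aemeasurable
      _ = ∑' k : ℕ, (k : ℝ≥0∞) ^ p * μ (B k) := by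
          refine tsum_congr fun k => ?_
          rw [lintegral_indicator_const (hBmeas k)]
      _ ≤ ∑' k : ℕ, (k : ℝ≥0∞) ^ p * (2 : ℝ≥0∞)⁻¹ ^ k :=
          ENNReal.tsum_le_tsum fun k => mul_le_mul_right (hφ k) _
      _ < ∞ := (aux_tsum_ne_top p hp).lt_top
  · rintro ⟨C, hC⟩
    set j : ℕ := ⌈(C : ℝ)⌉₊ + 1 with hj
    have hCj : C < (j : ℝ≥0) := by
      rw [← NNReal.coe_lt_coe]
      rw [hj]
      push_cast
      calc (C : ℝ) ≤ ⌈(C : ℝ)⌉₊ := Nat.le_ceil _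
        _ < ⌈(C : ℝ)⌉₊ + 1 := by linarith
    have hsub : B j ⊆ {ω | ¬ (g ω).toNNReal ≤ C} := by
      intro ω hω
      have : (g ω).toNNReal = (j : ℝ≥0) := by
        rw [hgval hω]; simp
      simp only [Set.mem_setOf_eq, this]
      exact fun h => absurd (lt_of_lt_of_le hCj h) (lt_irrefl _)
    have h0 : μ {ω | ¬ (g ω).toNNReal ≤ C} = 0 := ae_iff.mp hC
    have : μ (B j) ≤ μ {ω | ¬ (g ω).toNNReal ≤ C} := measure_mono hsub
    rw [h0] at this
    exact absurd (le_antisymm this zero_le) (hpos (φ j)).ne'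
end
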